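/- For every natural number d and every complex number x with -1 < Re x < 0, the integral ∫_0^∞ ((1-t)^d/(1+t)^{d+1})·t^{-x-1} dt (where for real t > 0, t^{-x-1} := exp((-x-1)·log t)) converges and equals -(π/sin(πx))·L_d(x). -/

import Mathlib

open MeasureTheory Set Complex

lemma betaIoi (a b : ℂ) (ha : 0 < a.re) (hb : 0 < b.re) :
    IntegrableOn (fun t : ℝ => (t : ℂ) ^ (a - 1) * ((1 : ℂ) + t) ^ (-(a + b))) (Ioi 0) ∧
      ∫ t in Ioi (0 : ℝ), (t : ℂ) ^ (a - 1) * ((1 : ℂ) + t) ^ (-(a + b)) =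
        Complex.Gamma a * Complex.Gamma b / Complex.Gamma (a + b) := by
  set g : ℝ → ℂ := fun t => (t : ℂ) ^ (a - 1) * ((1 : ℂ) + t) ^ (-(a + b)) with hg
  set f : ℝ → ℝ := fun u => u / (1 - u) with hf
  have hs : MeasurableSet (Ioo (0:ℝ) 1) := measurableSet_Ioo
  have hf' : ∀ u ∈ Ioo (0:ℝ) 1, HasDerivWithinAt f (((1 - u) ^ 2)⁻¹) (Ioo (0:ℝ) 1) u := by
    intro u hu
    have h1u : (1 : ℝ) - u ≠ 0 := sub_ne_zero.mpr hu.2.ne'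
    have := (hasDerivAt_id u).div ((hasDerivAt_const u (1:ℝ)).sub (hasDerivAt_id u)) h1u
    convert this.hasDerivWithinAt using 1
    · rfl
    · rfl
    · rfl
    · simp
  have hinj : InjOn f (Ioo (0:ℝ) 1) := by
    intro u hu v hv h
    have h1u : (1 : ℝ) - u ≠ 0 := sub_ne_zero.mpr hu.2.ne'
    have h1v : (1 : ℝ) - v ≠ 0 := sub_ne_zero.mpr hv.2.ne'
    simp only [hf] at h
    field_simp at h
    nlinarith [h]
  have himg : f '' (Ioo (0:ℝ) 1) = Ioi (0:ℝ) := by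
    ext y
    constructor
    · rintro ⟨u, hu, rfl⟩
      exact div_pos hu.1 (by linarith [hu.2])
    · intro hy
      refine ⟨y / (1 + y), ⟨div_pos hy (by linarith [mem_Ioi.mp hy]), ?_⟩, ?_⟩
      · rw [div_lt_one (by linarith [mem_Ioi.mp hy])]; linarith [mem_Ioi.mp hy]
      · have hy' := mem_Ioi.mp hy
        have h1y : (1 : ℝ) + y ≠ 0 := by positivity
        simp only [hf]
        have hden : 1 - y / (1 + y) = 1 / (1 + y) := by field_simp; ring
        rw [hden]
        field_simp
  have hpt : ∀ u ∈ Ioo (0:ℝ) 1,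
      |((1 - u) ^ 2)⁻¹| • g (f u) = (u : ℂ) ^ (a - 1) * ((1 : ℂ) - u) ^ (b - 1) := by
    intro u hu
    have hu0 : (0:ℝ) < u := hu.1
    have h1u : (0:ℝ) < 1 - u := by linarith [hu.2]
    have h1uC : ((1 : ℂ) - u) ≠ 0 := by
      rw [show ((1:ℂ) - u) = ((1 - u : ℝ) : ℂ) by push_cast; ring]
      exact_mod_cast h1u.ne'
    have harg : ((1 - u : ℝ) : ℂ).arg ≠ Real.pi := by
      rw [Complex.arg_ofReal_of_nonneg h1u.le]; exact Real.pi_ne_zero.symm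
    have hfu : (f u : ℂ) = ((u : ℝ) : ℂ) * (((1 - u : ℝ))⁻¹ : ℝ) := by
      push_cast [hf]; rw [div_eq_mul_inv]
    have h1fu : ((1 : ℂ) + (f u : ℝ)) = (((1 - u : ℝ))⁻¹ : ℝ) := by
      have : (1 : ℝ) + f u = (1 - u)⁻¹ := by
        simp only [hf]
        field_simp
        ring
      rw [show ((1:ℂ) + (f u : ℝ)) = ((1 + f u : ℝ) : ℂ) by push_cast; ring, this]
    simp only [hg]
    rw [h1fu, hfu]
    rw [mul_cpow_ofReal_nonneg hu0.le (inv_nonneg.mpr h1u.le)]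
    rw [Complex.ofReal_inv, Complex.inv_cpow _ _ harg, Complex.inv_cpow _ _ harg]
    rw [← Complex.cpow_neg, ← Complex.cpow_neg, neg_neg]
    have hsm : |((1 - u) ^ 2)⁻¹| = ((1 - u) ^ 2)⁻¹ := abs_of_pos (by positivity)
    rw [hsm]
    have hcast : (((1 - u)^2)⁻¹ : ℝ) • ((u : ℂ) ^ (a - 1) * ((1 - u : ℝ) : ℂ) ^ (-(a - 1)) *
        ((1 - u : ℝ) : ℂ) ^ (a + b)) =
        (u:ℂ)^(a-1) * (((1 - u : ℝ):ℂ) ^ (-(a-1)) * ((1 - u : ℝ):ℂ)^(a+b) * ((((1-u:ℝ):ℂ))^((2:ℂ)))⁻¹) := by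
      rw [Complex.real_smul, show ((2:ℂ)) = ((2:ℕ):ℂ) by norm_num, Complex.cpow_natCast]
      push_cast
      ring
    rw [hcast, ← Complex.cpow_neg, ← Complex.cpow_add _ _ (by exact_mod_cast h1u.ne'),
      ← Complex.cpow_add _ _ (by exact_mod_cast h1u.ne')]
    have : -(a - 1) + (a + b) + -(2:ℂ) = b - 1 := by ring
    rw [this]
    push_cast
    ring
  have hbetaInt : IntegrableOn (fun u : ℝ => (u : ℂ) ^ (a - 1) * ((1:ℂ) - u) ^ (b - 1)) (Ioo 0 1) := by
    have := (Complex.betaIntegral_convergent ha hb)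
    rw [intervalIntegrable_iff_integrableOn_Ioo_of_le zero_le_one] at this
    exact this
  have hiff := integrableOn_image_iff_integrableOn_abs_deriv_smul hs hf' hinj g
  rw [himg] at hiff
  have hInt : IntegrableOn g (Ioi 0) := by
    rw [hiff]
    exact (hbetaInt.congr_fun (fun u hu => (hpt u hu).symm) hs)
  refine ⟨hInt, ?_⟩
  have hval := integral_image_eq_integral_abs_deriv_smul hs hf' hinj g
  rw [himg] at hval
  rw [hval, setIntegral_congr_fun hs hpt]
  have : ∫ u in Ioo (0:ℝ) 1, (u : ℂ) ^ (a - 1) * ((1:ℂ) - u) ^ (b - 1) =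
      Complex.betaIntegral a b := by
    rw [Complex.betaIntegral, intervalIntegral.integral_of_le zero_le_one,
      ← MeasureTheory.integral_Ioc_eq_integral_Ioo]
  rw [this]
  rw [eq_div_iff (Complex.Gamma_ne_zero_of_re_pos (by simp only [Complex.add_re]; linarith))]
  rw [mul_comm, ← Complex.Gamma_mul_Gamma_eq_betaIntegral ha hb]

lemma myGamma_add_nat (z : ℂ) (hz : ∀ k : ℕ, z + k ≠ 0) (d : ℕ) :
    Complex.Gamma (z + d) = (∏ k ∈ Finset.range d, (z + k)) * Complex.Gamma z := by
  induction d with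
  | zero => simp
  | succ n ih =>
      have h : z + ((n + 1 : ℕ) : ℂ) = (z + n) + 1 := by push_cast; ring
      rw [h, Complex.Gamma_add_one _ (hz n), ih, Finset.prod_range_succ]
      ring

lemma mySin_shift (j : ℕ) (x : ℂ) :
    Complex.sin ((Real.pi : ℂ) * ((j : ℂ) - x)) =
      -((-1) ^ j * Complex.sin ((Real.pi : ℂ) * x)) := by
  induction j with
  | zero => simp [Complex.sin_neg, show (Real.pi:ℂ) * ((0:ℂ) - x) = -((Real.pi:ℂ)*x) by ring]
  | succ n ih =>
      have h : (Real.pi : ℂ) * (((n + 1 : ℕ) : ℂ) - x)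
          = (Real.pi : ℂ) * ((n : ℂ) - x) + Real.pi := by push_cast; ring
      rw [h, Complex.sin_antiperiodic _, ih]
      ring

/-- `binom(y, d) = (∏_{k=0}^{d-1} (y - k)) / d!` for complex `y`. -/
noncomputable def cbinom (y : ℂ) (d : ℕ) : ℂ :=
  (∏ k ∈ Finset.range d, (y - k)) / (Nat.factorial d : ℂ)

/-- The Ehrhart polynomial of the `d`-dimensional cross-polytope. -/
noncomputable def Lpoly (d : ℕ) (x : ℂ) : ℂ :=
  ∑ j ∈ Finset.range (d + 1), (Nat.choose d j : ℂ) * cbinom ((d : ℂ) - (j : ℂ) + x) d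

/-- For `-1 < Re x < 0`, the Mellin-type integral
`∫_0^∞ ((1-t)^d/(1+t)^{d+1}) t^{-x-1} dt` converges and equals `-(π/sin(πx)) L_d(x)`. -/
theorem mellin_integral_eq_ehrhart (d : ℕ) (x : ℂ) (h1 : -1 < x.re) (h2 : x.re < 0) :
    MeasureTheory.IntegrableOn
        (fun t : ℝ => ((1 - (t : ℂ)) ^ d / (1 + (t : ℂ)) ^ (d + 1)) *
          Complex.exp ((-x - 1) * (Real.log t : ℂ)))
        (Set.Ioi 0) ∧
      (∫ t in Set.Ioi (0 : ℝ), ((1 - (t : ℂ)) ^ d / (1 + (t : ℂ)) ^ (d + 1)) *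
          Complex.exp ((-x - 1) * (Real.log t : ℂ)))
        = -((Real.pi : ℂ) / Complex.sin (Real.pi * x)) * Lpoly d x := by
  have hxZ : ∀ n : ℤ, x.re ≠ (n : ℝ) := by
    intro n hn
    rcases le_or_gt 0 n with h | h
    · have h' : (0:ℝ) ≤ (n:ℝ) := by exact_mod_cast h
      rw [hn] at h2; linarith
    · have h' : (n:ℝ) ≤ -1 := by exact_mod_cast (by omega : n ≤ -1)
      rw [hn] at h1; linarith
  have hbeta : ∀ j ∈ Finset.range (d+1),
      IntegrableOn (fun t : ℝ => (t:ℂ) ^ ((j:ℂ) - x - 1) * ((1:ℂ) + t) ^ (-((d:ℂ)+1))) (Ioi 0) ∧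
      (∫ t in Ioi (0:ℝ), (t:ℂ) ^ ((j:ℂ) - x - 1) * ((1:ℂ) + t) ^ (-((d:ℂ)+1)))
        = Complex.Gamma ((j:ℂ) - x) * Complex.Gamma ((d:ℂ) + 1 - j + x) / (d.factorial : ℂ) := by
    intro j hj
    have hjd : j ≤ d := Nat.lt_succ_iff.mp (Finset.mem_range.mp hj)
    have hjd' : (j:ℝ) ≤ d := by exact_mod_cast hjd
    have haj : 0 < ((j:ℂ) - x).re := by
      simp only [Complex.sub_re, Complex.natCast_re]
      have : (0:ℝ) ≤ j := j.cast_nonneg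
      linarith
    have hbj : 0 < ((d:ℂ) + 1 - (j:ℂ) + x).re := by
      simp only [Complex.add_re, Complex.sub_re, Complex.natCast_re, Complex.one_re]
      linarith
    have hB := betaIoi ((j:ℂ) - x) ((d:ℂ) + 1 - (j:ℂ) + x) haj hbj
    have hsum : (((j:ℂ) - x) + ((d:ℂ) + 1 - (j:ℂ) + x)) = ((d:ℂ)+1) := by ring
    simp only [hsum] at hB
    rwa [Complex.Gamma_nat_eq_factorial] at hB
  have key : ∀ t ∈ Ioi (0:ℝ),
      ((1 - (t:ℂ))^d / (1 + (t:ℂ))^(d+1)) * Complex.exp ((-x - 1) * (Real.log t : ℂ))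
        = ∑ j ∈ Finset.range (d+1), (d.choose j : ℂ) * (-1)^j *
            ((t:ℂ) ^ ((j:ℂ) - x - 1) * ((1:ℂ) + t) ^ (-((d:ℂ)+1))) := by
    intro t ht
    have ht0 : (0:ℝ) < t := ht
    have htC : (t:ℂ) ≠ 0 := by exact_mod_cast ht0.ne'
    have hexp : Complex.exp ((-x - 1) * (Real.log t : ℂ)) = (t:ℂ) ^ (-x - 1) := by
      rw [Complex.cpow_def_of_ne_zero htC, Complex.ofReal_log ht0.le, mul_comm]
    have hpow : ((1:ℂ) + t) ^ (-((d:ℂ)+1)) = (((1:ℂ) + t) ^ (d+1 : ℕ))⁻¹ := by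
      rw [show ((d:ℂ)+1) = ((d+1 : ℕ) : ℂ) by push_cast; ring, Complex.cpow_neg,
        Complex.cpow_natCast]
    have hbin : (1 - (t:ℂ))^d
        = ∑ j ∈ Finset.range (d+1), (-(t:ℂ))^j * 1^(d-j) * (d.choose j : ℂ) := by
      rw [← add_pow]; ring_nf
    rw [hexp, hbin, Finset.sum_div, Finset.sum_mul]
    refine Finset.sum_congr rfl fun j hj => ?_
    rw [hpow]
    have hts : (t:ℂ) ^ (j : ℕ) * (t:ℂ) ^ (-x - 1) = (t:ℂ) ^ ((j:ℂ) - x - 1) := by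
      rw [← Complex.cpow_natCast, ← Complex.cpow_add _ _ htC]
      congr 1; push_cast; ring
    calc (-(t:ℂ))^j * 1^(d-j) * (d.choose j : ℂ) / (1 + (t:ℂ))^(d+1) * (t:ℂ)^(-x-1)
        = (d.choose j : ℂ) * (-1)^j *
            (((t:ℂ)^(j:ℕ) * (t:ℂ)^(-x-1)) * (((1:ℂ) + t)^(d+1 : ℕ))⁻¹) := by
          rw [neg_pow]; ring
      _ = _ := by rw [hts]
  have hIntSum : IntegrableOn (fun t : ℝ => ∑ j ∈ Finset.range (d+1),
      (d.choose j : ℂ) * (-1)^j *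
        ((t:ℂ) ^ ((j:ℂ) - x - 1) * ((1:ℂ) + t) ^ (-((d:ℂ)+1)))) (Ioi 0) := by
    apply MeasureTheory.integrable_finset_sum
    intro j hj
    exact ((hbeta j hj).1).const_mul _
  constructor
  · exact hIntSum.congr_fun (fun t ht => (key t ht).symm) measurableSet_Ioi
  · rw [MeasureTheory.setIntegral_congr_fun measurableSet_Ioi key]
    rw [MeasureTheory.integral_finset_sum _ (fun j hj => ((hbeta j hj).1).const_mul _)]
    have hterm : ∀ j ∈ Finset.range (d+1),
        (∫ t in Ioi (0:ℝ), (d.choose j : ℂ) * (-1)^j *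
          ((t:ℂ) ^ ((j:ℂ) - x - 1) * ((1:ℂ) + t) ^ (-((d:ℂ)+1))))
        = -((Real.pi:ℂ) / Complex.sin ((Real.pi:ℂ) * x)) *
            ((d.choose j : ℂ) * cbinom ((d:ℂ) - (j:ℂ) + x) d) := by
      intro j hj
      rw [MeasureTheory.integral_const_mul, (hbeta j hj).2]
      have hz : ∀ k : ℕ, ((1:ℂ) - (j:ℂ) + x) + k ≠ 0 := by
        intro k h
        have hre := congrArg Complex.re h
        simp only [Complex.add_re, Complex.sub_re, Complex.one_re, Complex.natCast_re,
          Complex.zero_re] at hre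
        exact hxZ ((j:ℤ) - 1 - k) (by push_cast; linarith)
      have hGb : Complex.Gamma ((d:ℂ) + 1 - (j:ℂ) + x)
          = (∏ k ∈ Finset.range d, ((1:ℂ) - (j:ℂ) + x + k)) *
              Complex.Gamma ((1:ℂ) - (j:ℂ) + x) := by
        rw [show (d:ℂ) + 1 - (j:ℂ) + x = ((1:ℂ) - (j:ℂ) + x) + d by ring]
        exact myGamma_add_nat _ hz d
      have hprod : (∏ k ∈ Finset.range d, ((1:ℂ) - (j:ℂ) + x + k))
          = ∏ k ∈ Finset.range d, (((d:ℂ) - (j:ℂ) + x) - k) := by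
        rw [← Finset.prod_range_reflect (fun k => ((1:ℂ) - (j:ℂ) + x + k)) d]
        refine Finset.prod_congr rfl fun k hk => ?_
        have hkd : k < d := Finset.mem_range.mp hk
        have hcast : ((d - 1 - k : ℕ) : ℂ) = (d:ℂ) - 1 - k := by
          have h1' : (d - 1 - k : ℕ) = d - (1 + k) := by omega
          rw [h1', Nat.cast_sub (by omega : 1 + k ≤ d)]
          push_cast; ring
        rw [hcast]; ring
      have hrefl : Complex.Gamma ((j:ℂ) - x) * Complex.Gamma ((1:ℂ) - (j:ℂ) + x)
          = (Real.pi : ℂ) / Complex.sin ((Real.pi:ℂ) * ((j:ℂ) - x)) := by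
        have h := Complex.Gamma_mul_Gamma_one_sub ((j:ℂ) - x)
        rwa [show (1:ℂ) - ((j:ℂ) - x) = (1:ℂ) - (j:ℂ) + x by ring] at h
      have he0 : ((-1:ℂ)^j) ≠ 0 := pow_ne_zero _ (by norm_num)
      have hsin : (-1:ℂ)^j * ((Real.pi:ℂ) / Complex.sin ((Real.pi:ℂ) * ((j:ℂ) - x)))
          = -((Real.pi:ℂ) / Complex.sin ((Real.pi:ℂ) * x)) := by
        rw [mySin_shift, div_neg, mul_neg, neg_inj,
          show (-1:ℂ)^j * ((Real.pi:ℂ)/((-1:ℂ)^j * Complex.sin ((Real.pi:ℂ)*x)))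
            = ((-1:ℂ)^j * (Real.pi:ℂ))/((-1:ℂ)^j * Complex.sin ((Real.pi:ℂ)*x))
            from (mul_div_assoc _ _ _).symm,
          mul_div_mul_left _ _ he0]
      rw [hGb, hprod]
      calc (d.choose j : ℂ) * (-1)^j * (Complex.Gamma ((j:ℂ)-x) *
              ((∏ k ∈ Finset.range d, (((d:ℂ) - (j:ℂ) + x) - k)) *
                Complex.Gamma ((1:ℂ) - (j:ℂ) + x)) / (d.factorial : ℂ))
          = (d.choose j : ℂ) * ((-1:ℂ)^j *
              (Complex.Gamma ((j:ℂ)-x) * Complex.Gamma ((1:ℂ) - (j:ℂ) + x))) *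
              ((∏ k ∈ Finset.range d, (((d:ℂ) - (j:ℂ) + x) - k)) / (d.factorial : ℂ)) := by
            ring
        _ = (d.choose j : ℂ) * (-((Real.pi:ℂ)/Complex.sin ((Real.pi:ℂ)*x))) *
              ((∏ k ∈ Finset.range d, (((d:ℂ) - (j:ℂ) + x) - k)) / (d.factorial : ℂ)) := by
            rw [hrefl, hsin]
        _ = -((Real.pi:ℂ)/Complex.sin ((Real.pi:ℂ)*x)) *
              ((d.choose j : ℂ) * cbinom ((d:ℂ) - (j:ℂ) + x) d) := by
            simp only [cbinom]; ring
    rw [Finset.sum_congr rfl hterm, Lpoly, Finset.mul_sum]
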